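/- With the seven states and probabilities of the previous setup, the matrix $A = \frac{1}{\Delta t}\sum_{i=1}^7 p_i \, \Delta Y^i (\Delta Y^i)^T$ equals the $3\times 3$ matrix with entries $a_{11}=f_1+c_{1,1}^2 g_1+c_{1,2}^2 g_2$, $a_{12}=a_{21}=c_{1,1}c_{2,1}g_1$, $a_{13}=a_{31}=c_{1,2}c_{3,2}g_2$, $a_{22}=f_2+c_{2,1}^2 g_1+c_{2,2}^2 g_3$, $a_{23}=a_{32}=c_{2,2}c_{3,1}g_3$, $a_{33}=f_3+c_{3,2}^2 g_2+c_{3,1}^2 g_3$. -/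

import Mathlib

open Matrix

open Matrix in
lemma vmv (a b c x y z : ℝ) : vecMulVec ![a,b,c] ![x,y,z] =
    !![a*x,a*y,a*z; b*x,b*y,b*z; c*x,c*y,c*z] := by
  ext i j
  fin_cases i <;> fin_cases j <;> simp [vecMulVec_apply]

set_option maxHeartbeats 2000000 in
theorem diffusion_matrix_identity
    (c11 c12 c21 c22 c31 c32 f1 f2 f3 g1 g2 g3 Δt : ℝ)
    (hc11 : 0 ≤ c11) (hc12 : 0 ≤ c12) (hc21 : 0 ≤ c21) (hc22 : 0 ≤ c22)
    (hc31 : 0 ≤ c31) (hc32 : 0 ≤ c32)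
    (hf1 : 0 ≤ f1) (hf2 : 0 ≤ f2) (hf3 : 0 ≤ f3)
    (hg1 : 0 ≤ g1) (hg2 : 0 ≤ g2) (hg3 : 0 ≤ g3)
    (hΔt : 0 < Δt)
    (ΔY : Fin 7 → (Fin 3 → ℝ)) (p : Fin 7 → ℝ)
    (hY : ΔY = ![![1,0,0], ![0,1,0], ![0,0,1], ![-c11,-c21,0],
      ![-c12,0,-c32], ![0,-c22,-c31], ![0,0,0]])
    (hp : p = ![f1*Δt, f2*Δt, f3*Δt, g1*Δt, g2*Δt, g3*Δt,
      1 - (f1*Δt + f2*Δt + f3*Δt + g1*Δt + g2*Δt + g3*Δt)])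
    (hpos : ∀ i, 0 ≤ p i) (hsum : ∑ i, p i = 1) :
    (1/Δt) • ∑ i, p i • vecMulVec (ΔY i) (ΔY i) =
      !![f1 + c11^2*g1 + c12^2*g2, c11*c21*g1, c12*c32*g2;
         c11*c21*g1, f2 + c21^2*g1 + c22^2*g3, c22*c31*g3;
         c12*c32*g2, c22*c31*g3, f3 + c32^2*g2 + c31^2*g3] := by
  subst hY hp
  rw [Fin.sum_univ_seven]
  have e0 : (![![(1:ℝ),0,0], ![0,1,0], ![0,0,1], ![-c11,-c21,0],
      ![-c12,0,-c32], ![0,-c22,-c31], ![0,0,0]]) 0 = ![1,0,0] := rfl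
  have e1 : (![![(1:ℝ),0,0], ![0,1,0], ![0,0,1], ![-c11,-c21,0],
      ![-c12,0,-c32], ![0,-c22,-c31], ![0,0,0]]) 1 = ![0,1,0] := rfl
  have e2 : (![![(1:ℝ),0,0], ![0,1,0], ![0,0,1], ![-c11,-c21,0],
      ![-c12,0,-c32], ![0,-c22,-c31], ![0,0,0]]) 2 = ![0,0,1] := rfl
  have e3 : (![![(1:ℝ),0,0], ![0,1,0], ![0,0,1], ![-c11,-c21,0],
      ![-c12,0,-c32], ![0,-c22,-c31], ![0,0,0]]) 3 = ![-c11,-c21,0] := rfl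
  have e4 : (![![(1:ℝ),0,0], ![0,1,0], ![0,0,1], ![-c11,-c21,0],
      ![-c12,0,-c32], ![0,-c22,-c31], ![0,0,0]]) 4 = ![-c12,0,-c32] := rfl
  have e5 : (![![(1:ℝ),0,0], ![0,1,0], ![0,0,1], ![-c11,-c21,0],
      ![-c12,0,-c32], ![0,-c22,-c31], ![0,0,0]]) 5 = ![0,-c22,-c31] := rfl
  have e6 : (![![(1:ℝ),0,0], ![0,1,0], ![0,0,1], ![-c11,-c21,0],
      ![-c12,0,-c32], ![0,-c22,-c31], ![0,0,0]]) 6 = ![0,0,0] := rfl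
  have q0 : (![f1*Δt, f2*Δt, f3*Δt, g1*Δt, g2*Δt, g3*Δt,
      1 - (f1*Δt + f2*Δt + f3*Δt + g1*Δt + g2*Δt + g3*Δt)]) 0 = f1*Δt := rfl
  have q1 : (![f1*Δt, f2*Δt, f3*Δt, g1*Δt, g2*Δt, g3*Δt,
      1 - (f1*Δt + f2*Δt + f3*Δt + g1*Δt + g2*Δt + g3*Δt)]) 1 = f2*Δt := rfl
  have q2 : (![f1*Δt, f2*Δt, f3*Δt, g1*Δt, g2*Δt, g3*Δt,
      1 - (f1*Δt + f2*Δt + f3*Δt + g1*Δt + g2*Δt + g3*Δt)]) 2 = f3*Δt := rfl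
  have q3 : (![f1*Δt, f2*Δt, f3*Δt, g1*Δt, g2*Δt, g3*Δt,
      1 - (f1*Δt + f2*Δt + f3*Δt + g1*Δt + g2*Δt + g3*Δt)]) 3 = g1*Δt := rfl
  have q4 : (![f1*Δt, f2*Δt, f3*Δt, g1*Δt, g2*Δt, g3*Δt,
      1 - (f1*Δt + f2*Δt + f3*Δt + g1*Δt + g2*Δt + g3*Δt)]) 4 = g2*Δt := rfl
  have q5 : (![f1*Δt, f2*Δt, f3*Δt, g1*Δt, g2*Δt, g3*Δt,
      1 - (f1*Δt + f2*Δt + f3*Δt + g1*Δt + g2*Δt + g3*Δt)]) 5 = g3*Δt := rfl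
  have q6 : (![f1*Δt, f2*Δt, f3*Δt, g1*Δt, g2*Δt, g3*Δt,
      1 - (f1*Δt + f2*Δt + f3*Δt + g1*Δt + g2*Δt + g3*Δt)]) 6
      = 1 - (f1*Δt + f2*Δt + f3*Δt + g1*Δt + g2*Δt + g3*Δt) := rfl
  rw [e0, e1, e2, e3, e4, e5, e6, q0, q1, q2, q3, q4, q5, q6,
    vmv, vmv, vmv, vmv, vmv, vmv, vmv]
  ext i j
  fin_cases i <;> fin_cases j <;>
    simp only [Matrix.smul_apply, Matrix.add_apply, Matrix.cons_val_zero,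
      Matrix.cons_val_one, Matrix.head_cons, Matrix.cons_val_two,
      Matrix.vecHead, Matrix.vecTail, Matrix.of_apply, Function.comp,
      Matrix.cons_val', Matrix.empty_val', Matrix.cons_val_fin_one,
      smul_eq_mul, Matrix.head_fin_const, Fin.zero_eta, Fin.mk_one, Fin.reduceFinMk,
        Matrix.cons_val, Matrix.cons_val_succ] <;>
    field_simp <;> ring
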